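/- Let p > 25/12, m₀ ≥ 1, and m satisfy m₀(3p−4)/(4(p−1)) + (p−2)/(p−1) < m ≤ m₀(p−4/3) + 3(p−2). Set β = m + 1/(p−1) − 1, m* = (m−2)/p + 1, α = 4(p−1)/(3p−4), and θ = 3(m+p−2)(4m(p−1)+m₀(4−3p)−4p+8) / (4(m(p−1)−p+2)(3m+(m₀+3)p−3(m₀+2))). Then θ ∈ (0,1) and m*/(βα) = θ·(1/p − 1/3) + (1−θ)·m*/m₀. -/

import Mathlib

theorem stmt_11 (p m₀ m : ℝ) (hp : 25 / 12 < p) (hm₀ : 1 ≤ m₀)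
    (hm1 : m₀ * (3 * p - 4) / (4 * (p - 1)) + (p - 2) / (p - 1) < m)
    (hm2 : m ≤ m₀ * (p - 4 / 3) + 3 * (p - 2)) :
    let β := m + 1 / (p - 1) - 1
    let mstar := (m - 2) / p + 1
    let α := 4 * (p - 1) / (3 * p - 4)
    let θ := 3 * (m + p - 2) * (4 * m * (p - 1) + m₀ * (4 - 3 * p) - 4 * p + 8) /
      (4 * (m * (p - 1) - p + 2) * (3 * m + (m₀ + 3) * p - 3 * (m₀ + 2)))
    θ ∈ Set.Ioo (0:ℝ) 1 ∧
    mstar / (β * α) = θ * (1 / p - 1 / 3) + (1 - θ) * (mstar / m₀) := by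
  intro β mstar α θ
  have hp1 : (0:ℝ) < p - 1 := by linarith
  have hp2 : (0:ℝ) < p := by linarith
  have hm0 : (0:ℝ) < m₀ := by linarith
  have h34 : (0:ℝ) < 3 * p - 4 := by linarith
  -- clear denominators in hm1
  have hm1' : m₀ * (3 * p - 4) + 4 * (p - 2) < 4 * m * (p - 1) := by
    rw [div_add_div _ _ (by positivity : (4:ℝ) * (p - 1) ≠ 0) (by positivity : p - 1 ≠ 0),
      div_lt_iff₀ (by positivity : (0:ℝ) < 4 * (p - 1) * (p - 1))] at hm1
    nlinarith [hm1, sq_nonneg (p-1)]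
  have hB : (0:ℝ) < 4 * m * (p - 1) + m₀ * (4 - 3 * p) - 4 * p + 8 := by nlinarith
  have hmpos : (0:ℝ) < m := by nlinarith
  have hC : (0:ℝ) < m + p - 2 := by nlinarith
  have hA : (0:ℝ) < m * (p - 1) - p + 2 := by nlinarith
  have hD : (0:ℝ) < 3 * m + (m₀ + 3) * p - 3 * (m₀ + 2) := by nlinarith
  have hlt : 3 * (m + p - 2) * (4 * m * (p - 1) + m₀ * (4 - 3 * p) - 4 * p + 8) <
      4 * (m * (p - 1) - p + 2) * (3 * m + (m₀ + 3) * p - 3 * (m₀ + 2)) := by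
    nlinarith [mul_pos hm0 h34, mul_nonneg (sub_nonneg.mpr hm2) h34.le,
      mul_nonneg (sub_nonneg.mpr hm2) hm0.le, mul_nonneg (sub_nonneg.mpr hm2) hp1.le,
      mul_pos hA hD, mul_pos hC hB]
  constructor
  · constructor
    · exact div_pos (by positivity) (by positivity)
    · rw [div_lt_one (by positivity)]; exact hlt
  · show mstar / (β * α) = θ * (1 / p - 1 / 3) + (1 - θ) * (mstar / m₀)
    have hβα : β * α = 4 * (m * (p - 1) - p + 2) / (3 * p - 4) := by
      show (m + 1 / (p - 1) - 1) * (4 * (p - 1) / (3 * p - 4)) = _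
      field_simp
      ring
    rw [hβα]
    show ((m - 2) / p + 1) / _ = θ * _ + (1 - θ) * (((m - 2) / p + 1) / m₀)
    show _ = (3 * (m + p - 2) * (4 * m * (p - 1) + m₀ * (4 - 3 * p) - 4 * p + 8) /
      (4 * (m * (p - 1) - p + 2) * (3 * m + (m₀ + 3) * p - 3 * (m₀ + 2)))) * (1 / p - 1 / 3) +
      (1 - 3 * (m + p - 2) * (4 * m * (p - 1) + m₀ * (4 - 3 * p) - 4 * p + 8) /
      (4 * (m * (p - 1) - p + 2) * (3 * m + (m₀ + 3) * p - 3 * (m₀ + 2)))) * (((m - 2) / p + 1) / m₀)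
    have hD' : 3 * m + (m₀ + 3) * p - 3 * (m₀ + 2) ≠ 0 := hD.ne'
    generalize hDg : 3 * m + (m₀ + 3) * p - 3 * (m₀ + 2) = D at hD' ⊢
    field_simp
    rw [← hDg]
    ring
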